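/- (Theorem 1) The CRAN throughput maximization problem is equivalent to a maximum weight clique problem over the CRAN-IDNC graph with vertex weight w(b, z, u, f, r) = r: the maximum, over all cliques C of the CRAN-IDNC graph, of the total weight ∑_{(b,z,u,f,r) ∈ C} r equals the maximum, over all feasible schedules, of the throughput ∑_{(b,z) : τ(b,z) ≠ ∅} |τ(b, z)| · r(b, z). (Both maxima exist since the sets of cliques and of feasible schedules are finite and contain the empty clique, respectively the empty schedule, of value 0.) -/
import Mathlib


/-- A vertex of the CRAN-IDNC graph: a tuple (b, z, u, f, r). -/
structure CV (B Z U F : Type*) where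
  b : B
  z : Z
  u : U
  f : F
  r : ℝ


noncomputable instance {B Z U F : Type*} : DecidableEq (CV B Z U F) :=
  Classical.decEq _

variable {B Z U F : Type*}

/-- `v` is a valid vertex: `f ∈ W(u)`, `r ∈ R`, and `r ≤ cap(b, z, u)`. -/
def IsVertex (W : U → Finset F) (Rset : Finset ℝ) (cap : B → Z → U → ℝ)
    (v : CV B Z U F) : Prop :=
  v.f ∈ W v.u ∧ v.r ∈ Rset ∧ v.r ≤ cap v.b v.z v.u

/-- Adjacency in the CRAN-IDNC graph. -/
def Adj (H : U → Finset F) (v v' : CV B Z U F) : Prop :=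
  v ≠ v' ∧
    (((v.b, v.z) = (v'.b, v'.z) ∧
        ((v.f = v'.f ∨ (v.f ∈ H v'.u ∧ v'.f ∈ H v.u)) ∧ v.r = v'.r)) ∨
      ((v.b, v.z) ≠ (v'.b, v'.z) ∧
        ((v.u = v'.u ∧ v.b = v'.b) ∨
          (v.b = v'.b ∧ (v.f = v'.f ∨ (v.f ∈ H v'.u ∧ v'.f ∈ H v.u))) ∨
          v.u ≠ v'.u)))

/-- A clique of the CRAN-IDNC graph: a finite set of valid vertices that are
pairwise adjacent. -/
def IsClique (H W : U → Finset F) (Rset : Finset ℝ) (cap : B → Z → U → ℝ)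
    (C : Finset (CV B Z U F)) : Prop :=
  (∀ v ∈ C, IsVertex W Rset cap v) ∧
    ∀ v ∈ C, ∀ v' ∈ C, v ≠ v' → Adj H v v'

/-- The feasibility conditions (i)–(iv) of a schedule `(τ, κ, rate)`:
(i) each user is served by at most one RRH; (ii) the combination `κ (b, z)`
contains exactly one wanted file of each targeted user and all its other files
are in that user's Has set; (iii) the rate does not exceed the capacity of any
targeted user (and lies in `Rset` whenever the block is used); and (iv) the
combination consists exactly of the wanted files of the targeted users. -/
def Feasible [DecidableEq F] (H W : U → Finset F) (Rset : Finset ℝ)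
    (cap : B → Z → U → ℝ) (τ : B → Z → Finset U) (κ : B → Z → Finset F)
    (rate : B → Z → ℝ) : Prop :=
  (∀ b z, (τ b z).Nonempty → rate b z ∈ Rset) ∧
  (∀ b z b' z' u, u ∈ τ b z → u ∈ τ b' z' → b = b') ∧
  (∀ b z u, u ∈ τ b z → ∃ f, κ b z ∩ W u = {f} ∧ κ b z \ {f} ⊆ H u) ∧
  (∀ b z u, u ∈ τ b z → rate b z ≤ cap b z u) ∧
  (∀ b z, κ b z = (τ b z).biUnion fun u => κ b z ∩ W u)


open Finset in
private lemma CV.ext' {v v' : CV B Z U F} (hb : v.b = v'.b) (hz : v.z = v'.z)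
    (hu : v.u = v'.u) (hf : v.f = v'.f) (hr : v.r = v'.r) : v = v' := by
  cases v; cases v'; simp_all

open Finset in
private lemma cliqueToSchedule [Fintype B] [Fintype Z] [Fintype U] [Fintype F]
    [DecidableEq B] [DecidableEq Z] [DecidableEq U] [DecidableEq F]
    (H W : U → Finset F) (Rset : Finset ℝ) (cap : B → Z → U → ℝ)
    (hDisj : ∀ u, Disjoint (H u) (W u))
    (C : Finset (CV B Z U F)) (hC : IsClique H W Rset cap C) :
    ∃ (τ : B → Z → Finset U) (κ : B → Z → Finset F) (rate : B → Z → ℝ),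
      Feasible H W Rset cap τ κ rate ∧
      ∑ v ∈ C, v.r = ∑ p ∈ Finset.univ.filter (fun p : B × Z => (τ p.1 p.2).Nonempty),
          ((τ p.1 p.2).card : ℝ) * rate p.1 p.2 := by
  classical
  obtain ⟨hvert, hadj⟩ := hC
  set filt : B → Z → Finset (CV B Z U F) :=
    fun b z => C.filter (fun v => v.b = b ∧ v.z = z) with hfilt
  have hCmem : ∀ b z v, v ∈ filt b z ↔ v ∈ C ∧ v.b = b ∧ v.z = z := by
    intro b z v; simp [hfilt]
  have hsame_r : ∀ b z, ∀ v ∈ filt b z, ∀ v' ∈ filt b z, v.r = v'.r := by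
    intro b z v hv v' hv'
    rw [hCmem] at hv hv'
    by_cases heq : v = v'
    · rw [heq]
    · rcases hadj v hv.1 v' hv'.1 heq with ⟨-, h⟩
      rcases h with ⟨-, -, hr⟩ | ⟨hne, -⟩
      · exact hr
      · exact absurd (by simp [Prod.ext_iff, hv.2.1, hv.2.2, hv'.2.1, hv'.2.2]) hne
  have hsame_u : ∀ b z, ∀ v ∈ filt b z, ∀ v' ∈ filt b z, v.u = v'.u → v = v' := by
    intro b z v hv v' hv' huu
    by_contra heq
    rw [hCmem] at hv hv'
    rcases hadj v hv.1 v' hv'.1 heq with ⟨-, h⟩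
    rcases h with ⟨-, hff, hr⟩ | ⟨hne, -⟩
    · rcases hff with hf | ⟨h1, h2⟩
      · exact heq (CV.ext' (hv.2.1.trans hv'.2.1.symm) (hv.2.2.trans hv'.2.2.symm) huu hf hr)
      · have hw : v'.f ∈ W v.u := by
          have := (hvert v' hv'.1).1; rwa [← huu] at this
        exact (Finset.disjoint_left.mp (hDisj v.u)) h2 hw
    · exact hne (by simp [Prod.ext_iff, hv.2.1, hv.2.2, hv'.2.1, hv'.2.2])
  set rate : B → Z → ℝ :=
    fun b z => if h : (filt b z).Nonempty then h.choose.r else 0 with hrate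
  have hrate_eq : ∀ b z, ∀ v ∈ filt b z, rate b z = v.r := by
    intro b z v hv
    have hne : (filt b z).Nonempty := ⟨v, hv⟩
    simp only [hrate, dif_pos hne]
    exact hsame_r b z _ hne.choose_spec v hv
  set τ : B → Z → Finset U := fun b z => (filt b z).image CV.u with hτ
  set κ : B → Z → Finset F := fun b z => (filt b z).image CV.f with hκ
  have hτmem : ∀ b z u, u ∈ τ b z ↔ ∃ v ∈ filt b z, v.u = u := by
    intro b z u; simp [hτ]
  have hκmem : ∀ b z f, f ∈ κ b z ↔ ∃ v ∈ filt b z, v.f = f := by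
    intro b z f; simp [hκ]
  refine ⟨τ, κ, rate, ⟨?_, ?_, ?_, ?_, ?_⟩, ?_⟩
  · -- rate in Rset
    intro b z hne
    obtain ⟨u, hu⟩ := hne
    obtain ⟨v, hv, -⟩ := (hτmem b z u).mp hu
    rw [hrate_eq b z v hv]
    exact (hvert v ((hCmem b z v).mp hv).1).2.1
  · -- (i)
    intro b z b' z' u hu hu'
    obtain ⟨v, hv, hvu⟩ := (hτmem b z u).mp hu
    obtain ⟨v', hv', hvu'⟩ := (hτmem b' z' u).mp hu'
    rw [hCmem] at hv hv'
    by_cases heq : v = v'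
    · rw [← hv.2.1, heq, hv'.2.1]
    · rcases hadj v hv.1 v' hv'.1 heq with ⟨-, h⟩
      have hbb : v.b = v'.b := by
        rcases h with ⟨hp, -⟩ | ⟨-, ⟨-, hb⟩ | ⟨hb, -⟩ | hnu⟩
        · exact (Prod.ext_iff.mp hp).1
        · exact hb
        · exact hb
        · exact absurd (hvu.trans hvu'.symm) hnu
      rw [← hv.2.1, hbb, hv'.2.1]
  · -- (ii)
    intro b z u hu
    obtain ⟨v, hv, hvu⟩ := (hτmem b z u).mp hu
    refine ⟨v.f, ?_, ?_⟩
    · rw [Finset.eq_singleton_iff_unique_mem]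
      constructor
      · refine Finset.mem_inter.mpr ⟨(hκmem b z v.f).mpr ⟨v, hv, rfl⟩, ?_⟩
        have := (hvert v ((hCmem b z v).mp hv).1).1
        rwa [hvu] at this
      · intro g hg
        obtain ⟨hgκ, hgW⟩ := Finset.mem_inter.mp hg
        obtain ⟨v', hv', rfl⟩ := (hκmem b z g).mp hgκ
        by_cases heq : v' = v
        · rw [heq]
        · have hvC := (hCmem b z v).mp hv
          have hv'C := (hCmem b z v').mp hv'
          rcases hadj v' hv'C.1 v hvC.1 heq with ⟨-, h⟩
          rcases h with ⟨-, hff, -⟩ | ⟨hne, -⟩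
          · rcases hff with hf | ⟨h1, -⟩
            · exact hf
            · rw [hvu] at h1
              exact absurd hgW (Finset.disjoint_left.mp (hDisj u) h1)
          · exact absurd (by simp [Prod.ext_iff, hvC.2.1, hvC.2.2, hv'C.2.1, hv'C.2.2]) hne
    · intro g hg
      obtain ⟨hgκ, hgne⟩ := Finset.mem_sdiff.mp hg
      obtain ⟨v', hv', rfl⟩ := (hκmem b z g).mp hgκ
      have hne' : v' ≠ v := by
        intro h; apply hgne; rw [h]; exact Finset.mem_singleton_self _
      have hvC := (hCmem b z v).mp hv
      have hv'C := (hCmem b z v').mp hv'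
      rcases hadj v' hv'C.1 v hvC.1 hne' with ⟨-, h⟩
      rcases h with ⟨-, hff, -⟩ | ⟨hne, -⟩
      · rcases hff with hf | ⟨h1, -⟩
        · exact absurd (by rw [hf]; exact Finset.mem_singleton_self _) hgne
        · rwa [hvu] at h1
      · exact absurd (by simp [Prod.ext_iff, hvC.2.1, hvC.2.2, hv'C.2.1, hv'C.2.2]) hne
  · -- (iii)
    intro b z u hu
    obtain ⟨v, hv, hvu⟩ := (hτmem b z u).mp hu
    have hvC := (hCmem b z v).mp hv
    rw [hrate_eq b z v hv]
    have := (hvert v hvC.1).2.2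
    rwa [hvC.2.1, hvC.2.2, hvu] at this
  · -- (iv)
    intro b z
    ext g
    simp only [Finset.mem_biUnion]
    constructor
    · intro hg
      obtain ⟨v, hv, rfl⟩ := (hκmem b z g).mp hg
      refine ⟨v.u, (hτmem b z v.u).mpr ⟨v, hv, rfl⟩, Finset.mem_inter.mpr ⟨hg, ?_⟩⟩
      exact (hvert v ((hCmem b z v).mp hv).1).1
    · rintro ⟨u, -, hg⟩
      exact (Finset.mem_inter.mp hg).1
  · -- sum equality
    have hcard : ∀ b z, (τ b z).card = (filt b z).card := by
      intro b z
      exact Finset.card_image_of_injOn (fun v hv v' hv' h => hsame_u b z v hv v' hv' h)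
    have hsum : ∀ b z, ∑ v ∈ filt b z, v.r = ((τ b z).card : ℝ) * rate b z := by
      intro b z
      rw [hcard,
        Finset.sum_congr rfl (fun v hv => (hrate_eq b z v hv).symm),
        Finset.sum_const, nsmul_eq_mul]
    have hfib : ∑ v ∈ C, v.r
        = ∑ p ∈ (Finset.univ : Finset (B × Z)), ∑ v ∈ filt p.1 p.2, v.r := by
      rw [← Finset.sum_fiberwise_of_maps_to
        (g := fun v : CV B Z U F => (v.b, v.z)) (fun v _ => Finset.mem_univ _)]
      refine Finset.sum_congr rfl (fun p _ => ?_)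
      congr 1
      ext v
      simp [hfilt, Prod.ext_iff]
    rw [hfib, Finset.sum_congr rfl (fun p _ => hsum p.1 p.2)]
    rw [Finset.sum_filter_of_ne]
    intro p _ hne
    have : (τ p.1 p.2).card ≠ 0 := by
      intro h; apply hne; rw [h]; simp
    exact Finset.card_pos.mp (Nat.pos_of_ne_zero this)

open Finset in
private lemma scheduleToClique [Fintype B] [Fintype Z] [Fintype U] [Fintype F]
    [DecidableEq B] [DecidableEq Z] [DecidableEq U] [DecidableEq F]
    (H W : U → Finset F) (Rset : Finset ℝ) (cap : B → Z → U → ℝ)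
    (τ : B → Z → Finset U) (κ : B → Z → Finset F) (rate : B → Z → ℝ)
    (hF : Feasible H W Rset cap τ κ rate) :
    ∃ C : Finset (CV B Z U F), IsClique H W Rset cap C ∧
      ∑ p ∈ Finset.univ.filter (fun p : B × Z => (τ p.1 p.2).Nonempty),
          ((τ p.1 p.2).card : ℝ) * rate p.1 p.2 = ∑ v ∈ C, v.r := by
  classical
  obtain ⟨h1, h2, h3, h4, h5⟩ := hF
  set fl : ∀ b z u, u ∈ τ b z → F := fun b z u h => (h3 b z u h).choose with hfl
  have flspec : ∀ b z u (h : u ∈ τ b z),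
      κ b z ∩ W u = {fl b z u h} ∧ κ b z \ {fl b z u h} ⊆ H u :=
    fun b z u h => (h3 b z u h).choose_spec
  have flW : ∀ b z u (h : u ∈ τ b z), fl b z u h ∈ W u := by
    intro b z u h
    have : fl b z u h ∈ κ b z ∩ W u := by
      rw [(flspec b z u h).1]; exact Finset.mem_singleton_self _
    exact (Finset.mem_inter.mp this).2
  have flκ : ∀ b z u (h : u ∈ τ b z), fl b z u h ∈ κ b z := by
    intro b z u h
    have : fl b z u h ∈ κ b z ∩ W u := by
      rw [(flspec b z u h).1]; exact Finset.mem_singleton_self _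
    exact (Finset.mem_inter.mp this).1
  set blockS : B × Z → Finset (CV B Z U F) := fun p =>
    (τ p.1 p.2).attach.image
      (fun u => ⟨p.1, p.2, u.1, fl p.1 p.2 u.1 u.2, rate p.1 p.2⟩) with hblock
  set C : Finset (CV B Z U F) := (Finset.univ : Finset (B × Z)).biUnion blockS with hCdef
  have hmem : ∀ v, v ∈ C ↔
      ∃ b z u, ∃ h : u ∈ τ b z, v = ⟨b, z, u, fl b z u h, rate b z⟩ := by
    intro v
    simp only [hCdef, Finset.mem_biUnion, Finset.mem_univ, true_and, hblock,
      Finset.mem_image, Finset.mem_attach, true_and, Prod.exists]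
    constructor
    · rintro ⟨b, z, ⟨u, hu⟩, rfl⟩
      exact ⟨b, z, u, hu, rfl⟩
    · rintro ⟨b, z, u, hu, rfl⟩
      exact ⟨b, z, ⟨u, hu⟩, rfl⟩
  refine ⟨C, ⟨?_, ?_⟩, ?_⟩
  · -- vertices
    intro v hv
    obtain ⟨b, z, u, hu, rfl⟩ := (hmem v).mp hv
    exact ⟨flW b z u hu, h1 b z ⟨u, hu⟩, h4 b z u hu⟩
  · -- adjacency
    intro v hv v' hv' hne
    obtain ⟨b, z, u, hu, rfl⟩ := (hmem v).mp hv
    obtain ⟨b', z', u', hu', rfl⟩ := (hmem v').mp hv'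
    refine ⟨hne, ?_⟩
    by_cases hbz : ((b, z) : B × Z) = (b', z')
    · left
      obtain ⟨hb, hz⟩ := Prod.ext_iff.mp hbz
      dsimp at hb hz ⊢
      subst hb; subst hz
      refine ⟨rfl, ?_, rfl⟩
      by_cases huu : u = u'
      · subst huu
        exfalso
        apply hne
        have : fl b z u hu = fl b z u hu' := by
          have e1 := (flspec b z u hu).1
          have e2 := (flspec b z u hu').1
          have := e1.symm.trans e2
          exact Finset.singleton_injective this
        rw [this]
      · by_cases hff : fl b z u hu = fl b z u' hu'
        · exact Or.inl hff
        · refine Or.inr ⟨?_, ?_⟩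
          · exact (flspec b z u' hu').2 (Finset.mem_sdiff.mpr ⟨flκ b z u hu, by
              simpa using hff⟩)
          · exact (flspec b z u hu).2 (Finset.mem_sdiff.mpr ⟨flκ b z u' hu', by
              simpa using fun h => hff h.symm⟩)
    · right
      refine ⟨hbz, ?_⟩
      by_cases huu : u = u'
      · exact Or.inl ⟨huu, by subst huu; exact h2 b z b' z' u hu hu'⟩
      · exact Or.inr (Or.inr huu)
  · -- sums
    have hdisj : (↑(Finset.univ : Finset (B × Z)) : Set (B × Z)).PairwiseDisjoint blockS := by
      intro p _ q _ hpq
      refine Finset.disjoint_left.mpr ?_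
      intro v hvp hvq
      apply hpq
      have e1 : (v.b, v.z) = p := by
        simp only [hblock, Finset.mem_image, Finset.mem_attach, true_and] at hvp
        obtain ⟨a, rfl⟩ := hvp; rfl
      have e2 : (v.b, v.z) = q := by
        simp only [hblock, Finset.mem_image, Finset.mem_attach, true_and] at hvq
        obtain ⟨a, rfl⟩ := hvq; rfl
      exact e1.symm.trans e2
    have hbsum : ∀ p : B × Z,
        ∑ v ∈ blockS p, v.r = ((τ p.1 p.2).card : ℝ) * rate p.1 p.2 := by
      intro p
      rw [hblock]
      rw [Finset.sum_image (by
        intro a _ a' _ h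
        have := congrArg CV.u h
        exact Subtype.ext this)]
      simp [Finset.card_attach, mul_comm]
    have : ∑ v ∈ C, v.r = ∑ p ∈ (Finset.univ : Finset (B × Z)),
        ((τ p.1 p.2).card : ℝ) * rate p.1 p.2 := by
      rw [hCdef, Finset.sum_biUnion hdisj]
      exact Finset.sum_congr rfl (fun p _ => hbsum p)
    rw [this, Finset.sum_filter_of_ne]
    intro p _ hne
    have : (τ p.1 p.2).card ≠ 0 := by
      intro h; apply hne; rw [h]; simp
    exact Finset.card_pos.mp (Nat.pos_of_ne_zero this)

/-- **Theorem 1.** The CRAN throughput maximization problem is equivalent to a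
maximum weight clique problem over the CRAN-IDNC graph: the maximum weight of a
clique equals the maximum throughput of a feasible schedule. -/
theorem throughput_max_eq_max_weight_clique {B Z U F : Type*}
    [Fintype B] [Fintype Z] [Fintype U] [Fintype F]
    [DecidableEq B] [DecidableEq Z] [DecidableEq U] [DecidableEq F]
    (H W : U → Finset F) (Rset : Finset ℝ) (cap : B → Z → U → ℝ)
    (hDisj : ∀ u, Disjoint (H u) (W u)) (hRpos : ∀ r ∈ Rset, 0 < r) :
    ∃ m : ℝ,
      IsGreatest {x : ℝ | ∃ C : Finset (CV B Z U F),
          IsClique H W Rset cap C ∧ x = ∑ v ∈ C, v.r} m ∧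
      IsGreatest {x : ℝ | ∃ (τ : B → Z → Finset U) (κ : B → Z → Finset F)
            (rate : B → Z → ℝ), Feasible H W Rset cap τ κ rate ∧
          x = ∑ p ∈ Finset.univ.filter (fun p : B × Z => (τ p.1 p.2).Nonempty),
            ((τ p.1 p.2).card : ℝ) * rate p.1 p.2} m := by
  classical
  set S₁ : Set ℝ := {x : ℝ | ∃ C : Finset (CV B Z U F),
      IsClique H W Rset cap C ∧ x = ∑ v ∈ C, v.r} with hS1
  have h0 : (0 : ℝ) ∈ S₁ := by
    refine ⟨∅, ⟨?_, ?_⟩, by simp⟩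
    · intro v hv; exact absurd hv (Finset.notMem_empty v)
    · intro v hv; exact absurd hv (Finset.notMem_empty v)
  set V₀ : Finset (CV B Z U F) := (Finset.univ ×ˢ Rset).image
    (fun q : (B × Z × U × F) × ℝ =>
      ⟨q.1.1, q.1.2.1, q.1.2.2.1, q.1.2.2.2, q.2⟩) with hV0
  have hsub : ∀ C : Finset (CV B Z U F), IsClique H W Rset cap C → C ⊆ V₀ := by
    intro C hC v hv
    have hr := (hC.1 v hv).2.1
    refine Finset.mem_image.mpr ⟨((v.b, v.z, v.u, v.f), v.r), ?_, by cases v; rfl⟩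
    exact Finset.mem_product.mpr ⟨Finset.mem_univ _, hr⟩
  have hfin : S₁.Finite := by
    apply Set.Finite.subset (V₀.powerset.image (fun C => ∑ v ∈ C, v.r)).finite_toSet
    rintro x ⟨C, hC, rfl⟩
    exact Finset.mem_coe.mpr (Finset.mem_image.mpr
      ⟨C, Finset.mem_powerset.mpr (hsub C hC), rfl⟩)
  have hne : S₁.Nonempty := ⟨0, h0⟩
  have hTne : hfin.toFinset.Nonempty := by
    rw [Set.Finite.toFinset_nonempty]; exact hne
  have hG1 : IsGreatest S₁ (hfin.toFinset.max' hTne) := by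
    constructor
    · have := hfin.toFinset.max'_mem hTne
      rwa [Set.Finite.mem_toFinset] at this
    · intro x hx
      exact hfin.toFinset.le_max' x ((Set.Finite.mem_toFinset hfin).mpr hx)
  refine ⟨hfin.toFinset.max' hTne, hG1, ?_⟩
  have hSeq : {x : ℝ | ∃ (τ : B → Z → Finset U) (κ : B → Z → Finset F)
        (rate : B → Z → ℝ), Feasible H W Rset cap τ κ rate ∧
      x = ∑ p ∈ Finset.univ.filter (fun p : B × Z => (τ p.1 p.2).Nonempty),
        ((τ p.1 p.2).card : ℝ) * rate p.1 p.2} = S₁ := by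
    ext x
    constructor
    · rintro ⟨τ, κ, rate, hF, rfl⟩
      obtain ⟨C, hC, heq⟩ := scheduleToClique H W Rset cap τ κ rate hF
      exact ⟨C, hC, heq⟩
    · rintro ⟨C, hC, rfl⟩
      obtain ⟨τ, κ, rate, hF, heq⟩ := cliqueToSchedule H W Rset cap hDisj C hC
      exact ⟨τ, κ, rate, hF, heq⟩
  rw [hSeq]
  exact hG1
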